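/- Let τ ∈ [0, (q−1)/q] and define f : F_q → ℝ by f(0) = √(1−τ) and f(α) = √(τ/(q−1)) for α ≠ 0. Then the Fourier transform f̂(x) = (1/√q) ∑_y χ_x(y) f(y) satisfies f̂(0) = √(1−τ^⊥) and f̂(α) = √(τ^⊥/(q−1)) for all α ≠ 0, where τ^⊥ = (√((q−1)(1−τ)) − √τ)² / q. -/

import Mathlib

open scoped BigOperators
open Finset

/-- The additive character `χ_y(x) = exp(2πi·Tr(x·y)/p)` of a finite field `F` of
characteristic `p`, where `Tr` is the (absolute) trace from `F` down to `F_p = ZMod p`. -/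
noncomputable def chi1 (F : Type) [Field F] [Fintype F]
    [Algebra (ZMod (ringChar F)) F] (y x : F) : ℂ :=
  Complex.exp (2 * Real.pi * Complex.I *
    ((Algebra.trace (ZMod (ringChar F)) F (x * y)).val : ℂ) / (ringChar F : ℂ))

/-- The Fourier transform on `F_q`: `f̂(x) = q^{-1/2} ∑_y χ_x(y) f(y)`. -/
noncomputable def FT1 (F : Type) [Field F] [Fintype F]
    [Algebra (ZMod (ringChar F)) F] (f : F → ℂ) : F → ℂ :=
  fun x => (Real.sqrt (Fintype.card F : ℝ) : ℂ)⁻¹ * ∑ y : F, chi1 F x y * f y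

/-- `τ^⊥ = (√((q−1)(1−τ)) − √τ)² / q`. -/
noncomputable def tauPerp (q τ : ℝ) : ℝ :=
  (Real.sqrt ((q - 1) * (1 - τ)) - Real.sqrt τ) ^ 2 / q

section aux

variable (F : Type) [Field F] [Fintype F] [Algebra (ZMod (ringChar F)) F]

lemma chi1_zero_right (x : F) : chi1 F x 0 = 1 := by simp [chi1]

lemma chi1_zero_left (y : F) : chi1 F 0 y = 1 := by simp [chi1]

lemma chi1_sum_eq_zero {α : F} (hα : α ≠ 0) : ∑ y : F, chi1 F α y = 0 := by
  have hp : Fact (ringChar F).Prime := ⟨CharP.char_is_prime F _⟩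
  haveI : NeZero (ringChar F) := ⟨hp.out.ne_zero⟩
  have hprim : IsPrimitiveRoot (Complex.exp (2 * Real.pi * Complex.I / (ringChar F)))
      (ringChar F) := Complex.isPrimitiveRoot_exp _ hp.out.ne_zero
  set ζ : ℂ := Complex.exp (2 * Real.pi * Complex.I / (ringChar F)) with hζdef
  have hζ : ζ ^ (ringChar F) = 1 := hprim.pow_eq_one
  set ψ : AddChar (ZMod (ringChar F)) ℂ := AddChar.zmodChar _ hζ with hψdef
  set Ψ : AddChar F ℂ := ψ.compAddMonoidHom
    ((Algebra.trace (ZMod (ringChar F)) F).toAddMonoidHom.comp (AddMonoidHom.mulRight α))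
    with hΨdef
  have key : ∀ y : F, chi1 F α y = Ψ y := by
    intro y
    have h1 : chi1 F α y = ζ ^ (Algebra.trace (ZMod (ringChar F)) F (y * α)).val := by
      rw [hζdef, ← Complex.exp_nat_mul, chi1]
      ring_nf
    rw [h1]
    simp [Ψ, ψ, AddChar.zmodChar_apply]
  have hΨ : Ψ ≠ 1 := by
    obtain ⟨b, hb⟩ := FiniteField.trace_to_zmod_nondegenerate F hα
    rw [AddChar.ne_one_iff]
    refine ⟨b, ?_⟩
    have h2 : Ψ b = ζ ^ (Algebra.trace (ZMod (ringChar F)) F (b * α)).val := by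
      simp [Ψ, ψ, AddChar.zmodChar_apply]
    rw [h2]
    intro hcon
    have hdvd : (ringChar F) ∣ (Algebra.trace (ZMod (ringChar F)) F (b * α)).val :=
      (hprim.pow_eq_one_iff_dvd _).mp hcon
    have hlt : (Algebra.trace (ZMod (ringChar F)) F (b * α)).val < ringChar F := ZMod.val_lt _
    have h0 : (Algebra.trace (ZMod (ringChar F)) F (b * α)).val = 0 :=
      Nat.eq_zero_of_dvd_of_lt hdvd hlt
    apply hb
    rw [mul_comm α b]
    exact (ZMod.val_eq_zero _).mp h0
  calc ∑ y : F, chi1 F α y = ∑ y : F, Ψ y := Finset.sum_congr rfl fun y _ => key y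
    _ = 0 := AddChar.sum_eq_zero_of_ne_one hΨ

lemma real_fact1 (q τ : ℝ) (hq : 2 ≤ q) (hτ0 : 0 ≤ τ) (hτ1 : τ ≤ (q-1)/q) :
    Real.sqrt (1 - tauPerp q τ)
      = (Real.sqrt q)⁻¹ * (Real.sqrt (1-τ) + (q-1) * Real.sqrt (τ/(q-1))) := by
  have hq0 : (0:ℝ) < q := by linarith
  have hq1 : (0:ℝ) < q - 1 := by linarith
  have hτq : q * τ ≤ q - 1 := by
    calc q * τ ≤ q * ((q-1)/q) := by nlinarith
    _ = q - 1 := by field_simp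
  have h1τ : (0:ℝ) ≤ 1 - τ := by nlinarith
  have hA2 : Real.sqrt (q-1)^2 = q - 1 := Real.sq_sqrt hq1.le
  have hQ2 : Real.sqrt q ^2 = q := Real.sq_sqrt hq0.le
  have hs2 : Real.sqrt τ ^2 = τ := Real.sq_sqrt hτ0
  have ht2 : Real.sqrt (1-τ) ^2 = 1 - τ := Real.sq_sqrt h1τ
  have hA0 : 0 < Real.sqrt (q-1) := Real.sqrt_pos.mpr hq1
  have hQ0 : 0 < Real.sqrt q := Real.sqrt_pos.mpr hq0
  have hs0 : 0 ≤ Real.sqrt τ := Real.sqrt_nonneg _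
  have ht0 : 0 ≤ Real.sqrt (1-τ) := Real.sqrt_nonneg _
  have hmul : Real.sqrt ((q-1)*(1-τ)) = Real.sqrt (q-1) * Real.sqrt (1-τ) :=
    Real.sqrt_mul hq1.le _
  have hdiv : Real.sqrt (τ/(q-1)) = Real.sqrt τ / Real.sqrt (q-1) := Real.sqrt_div hτ0 _
  have e1 : 1 - tauPerp q τ
      = ((Real.sqrt (1-τ) + Real.sqrt (q-1) * Real.sqrt τ)/Real.sqrt q)^2 := by
    rw [tauPerp, hmul, div_pow, hQ2]
    field_simp
    linear_combination (-(Real.sqrt (1-τ)^2 + Real.sqrt τ^2)) * hA2 - q * hs2 - q * ht2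
  rw [e1, Real.sqrt_sq (by positivity), hdiv, div_eq_inv_mul]
  congr 1
  field_simp
  linear_combination Real.sqrt τ * hA2

lemma real_fact2 (q τ : ℝ) (hq : 2 ≤ q) (hτ0 : 0 ≤ τ) (hτ1 : τ ≤ (q-1)/q) :
    Real.sqrt (tauPerp q τ / (q-1))
      = (Real.sqrt q)⁻¹ * (Real.sqrt (1-τ) - Real.sqrt (τ/(q-1))) := by
  have hq0 : (0:ℝ) < q := by linarith
  have hq1 : (0:ℝ) < q - 1 := by linarith
  have hτq : q * τ ≤ q - 1 := by
    calc q * τ ≤ q * ((q-1)/q) := by nlinarith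
    _ = q - 1 := by field_simp
  have h1τ : (0:ℝ) ≤ 1 - τ := by nlinarith
  have hA2 : Real.sqrt (q-1)^2 = q - 1 := Real.sq_sqrt hq1.le
  have hQ2 : Real.sqrt q ^2 = q := Real.sq_sqrt hq0.le
  have hA0 : 0 < Real.sqrt (q-1) := Real.sqrt_pos.mpr hq1
  have hQ0 : 0 < Real.sqrt q := Real.sqrt_pos.mpr hq0
  have hs0 : 0 ≤ Real.sqrt τ := Real.sqrt_nonneg _
  have ht0 : 0 ≤ Real.sqrt (1-τ) := Real.sqrt_nonneg _
  have hmul : Real.sqrt ((q-1)*(1-τ)) = Real.sqrt (q-1) * Real.sqrt (1-τ) :=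
    Real.sqrt_mul hq1.le _
  have hdiv : Real.sqrt (τ/(q-1)) = Real.sqrt τ / Real.sqrt (q-1) := Real.sqrt_div hτ0 _
  have hAts : Real.sqrt τ ≤ Real.sqrt (q-1) * Real.sqrt (1-τ) := by
    rw [← hmul]
    exact Real.sqrt_le_sqrt (by nlinarith)
  have hnn : 0 ≤ (Real.sqrt (1-τ) - Real.sqrt τ / Real.sqrt (q-1)) := by
    rw [sub_nonneg, div_le_iff₀ hA0]
    nlinarith
  have e2 : tauPerp q τ / (q-1)
      = ((Real.sqrt (1-τ) - Real.sqrt τ / Real.sqrt (q-1))/Real.sqrt q)^2 := by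
    rw [tauPerp, hmul, div_pow, hQ2]
    field_simp
    linear_combination (Real.sqrt (q-1) * Real.sqrt (1-τ) - Real.sqrt τ)^2 * hA2
  rw [e2, Real.sqrt_sq (by positivity), hdiv, div_eq_inv_mul]

end aux

/-- The Fourier transform of the "Bernoulli amplitude" function
`f(0) = √(1−τ)`, `f(α) = √(τ/(q−1))` for `α ≠ 0`, is of the same form with `τ`
replaced by `τ^⊥`. -/
theorem FT_bernoulli (F : Type) [Field F] [Fintype F]
    [Algebra (ZMod (ringChar F)) F] (τ : ℝ)
    (hτ0 : 0 ≤ τ) (hτ1 : τ ≤ ((Fintype.card F : ℝ) - 1) / (Fintype.card F : ℝ))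
    (f : F → ℂ)
    (hf0 : f 0 = (Real.sqrt (1 - τ) : ℂ))
    (hfα : ∀ α : F, α ≠ 0 → f α = (Real.sqrt (τ / ((Fintype.card F : ℝ) - 1)) : ℂ)) :
    FT1 F f 0 = (Real.sqrt (1 - tauPerp (Fintype.card F) τ) : ℂ) ∧
    ∀ α : F, α ≠ 0 →
      FT1 F f α =
        (Real.sqrt (tauPerp (Fintype.card F) τ / ((Fintype.card F : ℝ) - 1)) : ℂ) := by
  classical
  have hcard2 : 2 ≤ Fintype.card F := Fintype.one_lt_card
  have hq2 : (2:ℝ) ≤ (Fintype.card F : ℝ) := by exact_mod_cast hcard2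
  have hcast : ((Fintype.card F - 1 : ℕ) : ℂ) = (Fintype.card F : ℂ) - 1 := by
    push_cast [Nat.cast_sub (by omega : 1 ≤ Fintype.card F)]
    ring
  constructor
  · rw [FT1]
    have hsum : ∑ y : F, chi1 F 0 y * f y
        = (Real.sqrt (1-τ) : ℂ)
          + ((Fintype.card F : ℂ) - 1) * (Real.sqrt (τ/((Fintype.card F : ℝ)-1)) : ℂ) := by
      simp only [chi1_zero_left, one_mul]
      rw [← Finset.add_sum_erase _ f (Finset.mem_univ 0), hf0]
      congr 1
      rw [Finset.sum_congr rfl (fun y hy => hfα y (Finset.ne_of_mem_erase hy)),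
        Finset.sum_const, Finset.card_erase_of_mem (Finset.mem_univ 0), Finset.card_univ,
        nsmul_eq_mul, hcast]
    rw [hsum, real_fact1 _ τ hq2 hτ0 hτ1]
    push_cast
    ring
  · intro α hα
    rw [FT1]
    have hsum : ∑ y : F, chi1 F α y * f y
        = (Real.sqrt (1-τ) : ℂ) - (Real.sqrt (τ/((Fintype.card F : ℝ)-1)) : ℂ) := by
      rw [← Finset.add_sum_erase _ _ (Finset.mem_univ 0), chi1_zero_right, one_mul, hf0]
      rw [Finset.sum_congr rfl
        (fun y hy => by rw [hfα y (Finset.ne_of_mem_erase hy)]), ← Finset.sum_mul,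
        Finset.sum_erase_eq_sub (Finset.mem_univ 0), chi1_sum_eq_zero F hα,
        chi1_zero_right]
      ring
    rw [hsum, real_fact2 _ τ hq2 hτ0 hτ1]
    push_cast
    ring
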